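/- arXiv:1708.05063 — 6 statements merged into one kernel-verified Lean document; each statement's English description precedes it below -/
import Mathlib

section
/- The region automaton Reg(A) of a discrete timed automaton A is empty iff A is empty: A has an accepting run from (l₀, 0) to some (f, ν) with f final iff Reg(A) has a path from (l₀, 0^|X|) to some location (f, ν̂) with f final. -/
/-- Comparison operators appearing in clock constraints. -/
inductive CmpOp | lt | le | eq | gt | ge

/-- Satisfaction of an atomic constraint `v ⋈ k` over natural-valued clocks. -/
def CmpOp.satN : CmpOp → ℕ → ℕ → Prop
  | .lt, v, k => v < k
  | .le, v, k => v ≤ k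
  | .eq, v, k => v = k
  | .gt, v, k => v > k
  | .ge, v, k => v ≥ k

/-- Satisfaction over truncated values in `{0,…,K,∞}`. -/
def CmpOp.satE : CmpOp → ℕ∞ → ℕ → Prop
  | .lt, v, k => v < (k : ℕ∞)
  | .le, v, k => v ≤ (k : ℕ∞)
  | .eq, v, k => v = (k : ℕ∞)
  | .gt, v, k => v > (k : ℕ∞)
  | .ge, v, k => v ≥ (k : ℕ∞)

/-- A clock constraint: a finite conjunction of atoms `x ⋈ k`. -/
abbrev TGuard (X : Type) := List (X × CmpOp × ℕ)

def TGuard.satN {X : Type} (g : TGuard X) (ν : X → ℕ) : Prop :=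
  ∀ a ∈ g, CmpOp.satN a.2.1 (ν a.1) a.2.2

def TGuard.satE {X : Type} (g : TGuard X) (ρ : X → ℕ∞) : Prop :=
  ∀ a ∈ g, CmpOp.satE a.2.1 (ρ a.1) a.2.2

/-- A discrete timed automaton with locations `L`, clocks `X` and actions `A`:
edges are tuples `(l, g, a, Y, l')`. -/
structure DTA (L X A : Type) [DecidableEq X] where
  init : L
  final : L → Prop
  edges : Set (L × TGuard X × A × Finset X × L)

variable {L X A : Type} [DecidableEq X]

/-- One transition `(l,ν) →(t,e) (l',ν')` of the timed semantics: elapse `t`, check the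
guard on `ν+t`, reset the clocks in `Y`. -/
def dtaStepDur (M : DTA L X A) (t : ℕ) (s s' : L × (X → ℕ)) : Prop :=
  ∃ g a Y, (s.1, g, a, Y, s'.1) ∈ M.edges ∧
    TGuard.satN g (fun x => s.2 x + t) ∧
    s'.2 = fun x => if x ∈ Y then 0 else s.2 x + t

def dtaStep (M : DTA L X A) (s s' : L × (X → ℕ)) : Prop := ∃ t, dtaStepDur M t s s'

/-- Unit time elapse on truncated valuations: components exceeding `K` become `∞`. -/
def tickE (K : ℕ) (ρ : X → ℕ∞) : X → ℕ∞ :=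
  fun x => if ρ x + 1 ≤ (K : ℕ∞) then ρ x + 1 else ⊤

/-- A discrete edge of the region automaton. -/
def regDisc (M : DTA L X A) (s s' : L × (X → ℕ∞)) : Prop :=
  ∃ g a Y, (s.1, g, a, Y, s'.1) ∈ M.edges ∧ TGuard.satE g s.2 ∧
    s'.2 = fun x => if x ∈ Y then 0 else s.2 x

/-- A transition of the region automaton `Reg(M)`: either a unit tick or a discrete edge. -/
def regStep (M : DTA L X A) (K : ℕ) (s s' : L × (X → ℕ∞)) : Prop :=
  (s'.1 = s.1 ∧ s'.2 = tickE K s.2) ∨ regDisc M s s'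

/-- Abstraction of a natural clock value into `{0,…,K,∞}`. -/
def toE (K n : ℕ) : ℕ∞ := if n ≤ K then (n : ℕ∞) else ⊤

lemma toE_sat {K k : ℕ} (hk : k ≤ K) (op : CmpOp) (v : ℕ) :
    CmpOp.satE op (toE K v) k ↔ CmpOp.satN op v k := by
  unfold toE
  by_cases h : v ≤ K
  · simp only [if_pos h]
    cases op <;> simp [CmpOp.satE, CmpOp.satN] <;> exact_mod_cast Iff.rfl
  · push_neg at h
    simp only [if_neg (not_le.mpr h)]
    cases op <;>
      simp [CmpOp.satE, CmpOp.satN, (WithTop.coe_lt_top k), not_top_lt] <;> omega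

lemma toE_guard {K : ℕ} (g : TGuard X) (hg : ∀ a ∈ g, a.2.2 ≤ K) (ν : X → ℕ) :
    TGuard.satE g (fun x => toE K (ν x)) ↔ TGuard.satN g ν := by
  unfold TGuard.satE TGuard.satN
  exact forall₂_congr fun a ha => toE_sat (hg a ha) _ _

lemma tickE_toE (K : ℕ) (ν : X → ℕ) :
    tickE K (fun x => toE K (ν x)) = fun x => toE K (ν x + 1) := by
  funext x; unfold tickE toE
  by_cases h : ν x ≤ K
  · simp only [if_pos h]
    by_cases h2 : ν x + 1 ≤ K
    · rw [if_pos (by exact_mod_cast h2), if_pos h2]; push_cast; ring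
    · rw [if_neg (by exact_mod_cast h2), if_neg h2]
  · have h2 : ¬ ν x + 1 ≤ K := by omega
    simp only [if_neg h, if_neg h2]
    rw [if_neg]
    simp

lemma ticks_reach (M : DTA L X A) (K : ℕ) (l : L) (ν : X → ℕ) (t : ℕ) :
    Relation.ReflTransGen (regStep M K) (l, fun x => toE K (ν x))
      (l, fun x => toE K (ν x + t)) := by
  induction t with
  | zero => simpa using Relation.ReflTransGen.refl
  | succ n ih =>
      refine ih.tail (Or.inl ⟨rfl, ?_⟩)
      show (fun x => toE K (ν x + (n + 1))) = tickE K (fun x => toE K (ν x + n))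
      rw [tickE_toE K (fun x => ν x + n)]
      funext x; rw [add_assoc]

/-- `Reg(A)` is empty iff `A` is empty: `A` has a run from `(l₀,0)` to a final
location iff `Reg(A)` has a path from `(l₀,0^|X|)` to a final location (all guard constants
being at most `K`). -/
theorem stmt4 (M : DTA L X A) (K : ℕ)
    (hK : ∀ e ∈ M.edges, ∀ a ∈ e.2.1, a.2.2 ≤ K) :
    (∃ (l : L) (ν : X → ℕ), M.final l ∧
        Relation.ReflTransGen (dtaStep M) (M.init, fun _ => 0) (l, ν)) ↔
    (∃ (l : L) (ρ : X → ℕ∞), M.final l ∧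
        Relation.ReflTransGen (regStep M K) (M.init, fun _ => 0) (l, ρ)) := by
  have hzero : (fun _ : X => (0 : ℕ∞)) = fun x : X => toE K ((fun _ => 0 : X → ℕ) x) := by
    funext x; simp [toE]
  constructor
  · rintro ⟨l, ν, hf, hrun⟩
    refine ⟨l, fun x => toE K (ν x), hf, ?_⟩
    rw [hzero]
    clear hf
    have : ∀ (s : L × (X → ℕ)),
        Relation.ReflTransGen (dtaStep M) (M.init, fun _ => 0) s →
        Relation.ReflTransGen (regStep M K)
          (M.init, fun x => toE K ((fun _ => 0 : X → ℕ) x))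
          (s.1, fun x => toE K (s.2 x)) := by
      intro s hrun
      induction hrun with
      | refl => exact .refl
      | tail h1 h2 ih =>
        obtain ⟨t, g, a, Y, he, hg, hv⟩ := h2
        refine ih.trans ?_
        refine (ticks_reach M K _ _ t).tail (Or.inr ⟨g, a, Y, he, ?_, ?_⟩)
        · exact (toE_guard g (fun p hp => hK _ he p hp) _).mpr hg
        · funext x
          show toE K _ = _
          rw [hv]
          by_cases hx : x ∈ Y <;> simp [hx, toE]
    exact this (l, ν) hrun
  · rintro ⟨l, ρ, hf, hrun⟩
    have key : ∀ (s : L × (X → ℕ∞)),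
        Relation.ReflTransGen (regStep M K) (M.init, fun _ => 0) s →
        ∃ (ν : X → ℕ) (t : ℕ),
          Relation.ReflTransGen (dtaStep M) (M.init, fun _ => 0) (s.1, ν) ∧
          s.2 = fun x => toE K (ν x + t) := by
      intro s hrun
      induction hrun with
      | refl =>
        exact ⟨fun _ => 0, 0, .refl, by funext x; simp [toE]⟩
      | tail h1 h2 ih =>
        obtain ⟨ν, t, hreach, habs⟩ := ih
        rcases h2 with ⟨hl, hv⟩ | ⟨g, a, Y, he, hg, hv⟩
        · refine ⟨ν, t + 1, hl ▸ hreach, ?_⟩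
          rw [hv, habs, tickE_toE K (fun x => ν x + t)]
          funext x; rw [add_assoc]
        · refine ⟨fun x => if x ∈ Y then 0 else ν x + t, 0, ?_, ?_⟩
          · refine hreach.tail ⟨t, g, a, Y, he, ?_, rfl⟩
            rw [habs] at hg
            exact (toE_guard g (fun p hp => hK _ he p hp) _).mp hg
          · rw [hv, habs]
            funext x
            by_cases hx : x ∈ Y <;> simp [hx, toE]
    obtain ⟨ν, t, hreach, _⟩ := key _ hrun
    exact ⟨l, ν, hf, hreach⟩
end

section
/- The subset sum problem reduces to reachability in a two-process CTA: given positive integers a₁,…,aₙ and target c, the CTA constructed below reaches location r_f iff there exists T ⊆ {1,…,n} with Σ_{i∈T} aᵢ = c. -/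
/-- Channel operations of the writer `A`. -/
inductive OpA (α : Type) | nop | write (a : α)

/-- Channel operations of the reader `B`: a read checks that the age lies in interval `I`. -/
inductive OpB (α : Type) | nop | read (a : α) (I : Set ℕ)

/-- A CTA with two timed automata `A`, `B`, disjoint clock sets `XA`, `XB` (no global
clocks), and a single channel `c_{A,B}` from `A` to `B` over alphabet `α`. -/
structure TwoCTA (LA LB XA XB α : Type) [DecidableEq XA] [DecidableEq XB] where
  initA : LA
  initB : LB
  edgesA : Set (LA × TGuard XA × OpA α × Finset XA × LA)
  edgesB : Set (LB × TGuard XB × OpB α × Finset XB × LB)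

/-- Configurations: locations and valuations of the two automata, and the channel content
(newest message first, head of the channel last). -/
abbrev Conf2 (LA LB XA XB α : Type) :=
  (LA × (XA → ℕ)) × (LB × (XB → ℕ)) × List (α × ℕ)

variable {LA LB XA XB α : Type} [DecidableEq XA] [DecidableEq XB]

/-- One transition of the CTA, labelled by its duration (discrete transitions have
duration `0`): time elapse, internal moves, a write appending `(a,0)`, or a read of the
head message subject to its age constraint. -/
inductive StepD (M : TwoCTA LA LB XA XB α) :
    ℕ → Conf2 LA LB XA XB α → Conf2 LA LB XA XB α → Prop
  | time (t : ℕ) (lA : LA) (νA : XA → ℕ) (lB : LB) (νB : XB → ℕ) (w : List (α × ℕ)) :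
      StepD M t ((lA, νA), (lB, νB), w)
        ((lA, fun x => νA x + t), (lB, fun x => νB x + t), w.map fun p => (p.1, p.2 + t))
  | anop {lA : LA} {νA : XA → ℕ} {g : TGuard XA} {Y : Finset XA} {lA' : LA}
      (lB : LB) (νB : XB → ℕ) (w : List (α × ℕ)) :
      (lA, g, OpA.nop, Y, lA') ∈ M.edgesA → TGuard.satN g νA →
      StepD M 0 ((lA, νA), (lB, νB), w)
        ((lA', fun x => if x ∈ Y then 0 else νA x), (lB, νB), w)
  | awrite {lA : LA} {νA : XA → ℕ} {g : TGuard XA} {a : α} {Y : Finset XA} {lA' : LA}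
      (lB : LB) (νB : XB → ℕ) (w : List (α × ℕ)) :
      (lA, g, OpA.write a, Y, lA') ∈ M.edgesA → TGuard.satN g νA →
      StepD M 0 ((lA, νA), (lB, νB), w)
        ((lA', fun x => if x ∈ Y then 0 else νA x), (lB, νB), (a, 0) :: w)
  | bnop {lB : LB} {νB : XB → ℕ} {g : TGuard XB} {Y : Finset XB} {lB' : LB}
      (lA : LA) (νA : XA → ℕ) (w : List (α × ℕ)) :
      (lB, g, OpB.nop, Y, lB') ∈ M.edgesB → TGuard.satN g νB →
      StepD M 0 ((lA, νA), (lB, νB), w)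
        ((lA, νA), (lB', fun x => if x ∈ Y then 0 else νB x), w)
  | bread {lB : LB} {νB : XB → ℕ} {g : TGuard XB} {a : α} {I : Set ℕ} {Y : Finset XB}
      {lB' : LB} {t : ℕ} (lA : LA) (νA : XA → ℕ) (w : List (α × ℕ)) :
      (lB, g, OpB.read a I, Y, lB') ∈ M.edgesB → TGuard.satN g νB → t ∈ I →
      StepD M 0 ((lA, νA), (lB, νB), w ++ [(a, t)])
        ((lA, νA), (lB', fun x => if x ∈ Y then 0 else νB x), w)

/-- Reachability together with the total elapsed time (sum of durations of timed
transitions), starting from the initial configuration with empty channel. -/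
inductive ReachT (M : TwoCTA LA LB XA XB α) : ℕ → Conf2 LA LB XA XB α → Prop
  | init : ReachT M 0 ((M.initA, fun _ => 0), (M.initB, fun _ => 0), [])
  | step {T : ℕ} {γ : Conf2 LA LB XA XB α} {t : ℕ} {γ' : Conf2 LA LB XA XB α} :
      ReachT M T γ → StepD M t γ γ' → ReachT M (T + t) γ'

/-- The two clocks `x`, `y` of process `B` in the subset-sum gadget. -/
inductive BClock | x | y
  deriving DecidableEq

/-- The subset-sum CTA: `A` has locations `s_{a₁},…,s_{aₙ}` (plus an end location), no
clocks, and writes message `i` (standing for `aᵢ`) while moving from `s_{aᵢ}` to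
`s_{a_{i+1}}`.  `B` has clocks `x,y` and locations `r_{a₁},…,r_{aₙ}` plus `r_f`; from
`r_{aᵢ}` it reads message `i` either checking `x = aᵢ` and resetting `x` (including `aᵢ`)
or checking `x = 0` (excluding it); from the last location it moves to `r_f` iff `x = 0`
and `y = c`.  Clock `y` is never reset. -/
def ssCTA (n : ℕ) (a : Fin n → ℕ) (c : ℕ) :
    TwoCTA (Fin (n + 1)) (Fin (n + 1) ⊕ Unit) Empty BClock (Fin n) where
  initA := 0
  initB := Sum.inl 0
  edgesA := {e | ∃ i : Fin n, e = (i.castSucc, [], OpA.write i, ∅, i.succ)}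
  edgesB :=
    {e | ∃ i : Fin n, e = (Sum.inl i.castSucc, [(BClock.x, CmpOp.eq, a i)],
        OpB.read i Set.univ, {BClock.x}, Sum.inl i.succ)} ∪
    {e | ∃ i : Fin n, e = (Sum.inl i.castSucc, [(BClock.x, CmpOp.eq, 0)],
        OpB.read i Set.univ, ∅, Sum.inl i.succ)} ∪
    {(Sum.inl (Fin.last n), [(BClock.x, CmpOp.eq, 0), (BClock.y, CmpOp.eq, c)],
        OpB.nop, ∅, Sum.inr ())}

/-- The invariant on the `B` side. -/
def InvB (n : ℕ) (a : Fin n → ℕ) (c : ℕ) : (Fin (n + 1) ⊕ Unit) → (BClock → ℕ) → Prop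
  | Sum.inl q, ν => ∃ S : Finset (Fin n), (∀ j ∈ S, (j : ℕ) < (q : ℕ)) ∧
      (∑ j ∈ S, a j) + ν BClock.x = ν BClock.y
  | Sum.inr _, _ => ∃ S : Finset (Fin n), ∑ j ∈ S, a j = c

lemma inv_step {n : ℕ} {a : Fin n → ℕ} {c : ℕ} {t : ℕ}
    {γ γ' : Conf2 (Fin (n + 1)) (Fin (n + 1) ⊕ Unit) Empty BClock (Fin n)}
    (hs : StepD (ssCTA n a c) t γ γ')
    (h : InvB n a c γ.2.1.1 γ.2.1.2) : InvB n a c γ'.2.1.1 γ'.2.1.2 := by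
  cases hs with
  | time t lA νA lB νB w =>
    cases lB with
    | inl q =>
      obtain ⟨S, hlt, hsum⟩ := h
      dsimp only at hsum
      refine ⟨S, hlt, ?_⟩
      show (∑ j ∈ S, a j) + (νB BClock.x + t) = νB BClock.y + t
      omega
    | inr u => exact h
  | anop lB νB w hmem hg => exact h
  | awrite lB νB w hmem hg => exact h
  | bnop lA νA w hmem hg =>
    rcases hmem with (⟨i, hi⟩ | ⟨i, hi⟩) | hi
    · simp only [Prod.mk.injEq] at hi
      exact absurd hi.2.2.1 (by simp)
    · simp only [Prod.mk.injEq] at hi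
      exact absurd hi.2.2.1 (by simp)
    · rw [Set.mem_singleton_iff] at hi
      simp only [Prod.mk.injEq] at hi
      obtain ⟨h1, h2, _, h4, h5⟩ := hi
      subst h1; subst h2; subst h5
      obtain ⟨S, hlt, hsum⟩ := h
      have hx := hg _ (by simp : (BClock.x, CmpOp.eq, 0) ∈ _)
      have hy := hg _ (by simp : (BClock.y, CmpOp.eq, c) ∈ _)
      simp only [CmpOp.satN] at hx hy
      dsimp only at hsum
      exact ⟨S, by omega⟩
  | bread lA νA w hmem hg hI =>
    rename_i msg Iset Yset lBtgt t0
    rcases hmem with (⟨i, hi⟩ | ⟨i, hi⟩) | hi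
    · simp only [Prod.mk.injEq] at hi
      obtain ⟨h1, h2, h3, h4, h5⟩ := hi
      injection h3 with hmsg hIeq
      subst hmsg; subst hIeq
      subst h1; subst h2; subst h4; subst h5
      obtain ⟨S, hlt, hsum⟩ := h
      dsimp only at hsum
      have hx := hg _ (by simp : (BClock.x, CmpOp.eq, a msg) ∈ _)
      simp only [CmpOp.satN] at hx
      have hiS : msg ∉ S := fun hmem => by
        have := hlt msg hmem; simp [Fin.coe_castSucc] at this
      refine ⟨insert msg S, ?_, ?_⟩
      · intro j hj
        rcases Finset.mem_insert.mp hj with rfl | hj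
        · simp [Fin.val_succ]
        · have := hlt j hj; simp only [Fin.coe_castSucc] at this
          simp only [Fin.val_succ]; omega
      · rw [Finset.sum_insert hiS]
        simp only [Finset.mem_singleton]
        simp only [if_true, if_neg (show ¬(BClock.y = BClock.x) by decide)]
        omega
    · simp only [Prod.mk.injEq] at hi
      obtain ⟨h1, h2, h3, h4, h5⟩ := hi
      injection h3 with hmsg hIeq
      subst hmsg; subst hIeq
      subst h1; subst h2; subst h4; subst h5
      obtain ⟨S, hlt, hsum⟩ := h
      dsimp only at hsum
      refine ⟨S, ?_, ?_⟩
      · intro j hj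
        have := hlt j hj; simp only [Fin.coe_castSucc] at this
        simp only [Fin.val_succ]; omega
      · simpa using hsum
    · rw [Set.mem_singleton_iff] at hi
      simp only [Prod.mk.injEq] at hi
      exact absurd hi.2.2.1 (by simp)

lemma reach_inv {n : ℕ} {a : Fin n → ℕ} {c : ℕ} {T : ℕ}
    {γ : Conf2 (Fin (n + 1)) (Fin (n + 1) ⊕ Unit) Empty BClock (Fin n)}
    (h : ReachT (ssCTA n a c) T γ) : InvB n a c γ.2.1.1 γ.2.1.2 := by
  induction h with
  | init => exact ⟨∅, by simp⟩
  | step hr hs ih => exact inv_step hs ih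

/-- Canonical valuations. -/
def νE : Empty → ℕ := fun e => e.elim

def νC (u v : ℕ) : BClock → ℕ := fun b => match b with | .x => u | .y => v

lemma νE_add (t : ℕ) : (fun x => νE x + t) = νE := funext fun e => e.elim

lemma νE_reset (Y : Finset Empty) :
    (fun x => if x ∈ Y then 0 else νE x) = νE := funext fun e => e.elim

lemma νC_add (u v t : ℕ) : (fun z => νC u v z + t) = νC (u + t) (v + t) := by
  funext b; cases b <;> rfl

lemma νC_reset_x (u v : ℕ) :
    (fun z => if z ∈ ({BClock.x} : Finset BClock) then 0 else νC u v z) = νC 0 v := by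
  funext b; cases b <;> simp [νC]

lemma νC_reset_x' (u v : ℕ) :
    (fun z => if z = BClock.x then 0 else νC u v z) = νC 0 v := by
  funext b; cases b <;> simp [νC]

lemma νC_reset_none (u v : ℕ) :
    (fun z => if z ∈ (∅ : Finset BClock) then 0 else νC u v z) = νC u v := by
  funext b; cases b <;> simp

lemma run_lemma {n : ℕ} (a : Fin n → ℕ) (c : ℕ) (T : Finset (Fin n)) :
    ∀ k (hk : k ≤ n),
      ReachT (ssCTA n a c) (∑ j ∈ T.filter (fun j : Fin n => (j : ℕ) < k), a j)
        ((⟨k, by omega⟩, νE),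
         (Sum.inl ⟨k, by omega⟩, νC 0 (∑ j ∈ T.filter (fun j : Fin n => (j : ℕ) < k), a j)),
         []) := by
  intro k
  induction k with
  | zero =>
    intro hk
    have h0 : T.filter (fun j : Fin n => (j : ℕ) < 0) = ∅ := by
      ext j; simp
    rw [h0]
    have := ReachT.init (M := ssCTA n a c)
    have hA : (ssCTA n a c).initA = (⟨0, by omega⟩ : Fin (n + 1)) := rfl
    have hB : (ssCTA n a c).initB = (Sum.inl (⟨0, by omega⟩ : Fin (n + 1)) :
        Fin (n + 1) ⊕ Unit) := rfl
    have hν0 : (fun _ => 0 : BClock → ℕ) = νC 0 0 := by funext b; cases b <;> rfl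
    have hνE0 : (fun _ => 0 : Empty → ℕ) = νE := funext fun e => e.elim
    simpa [hA, hB, hν0, hνE0] using this
  | succ k ih =>
    intro hk
    have hk' : k ≤ n := by omega
    have hkn : k < n := by omega
    set i : Fin n := ⟨k, hkn⟩ with hi
    have hreach := ih hk'
    set s := ∑ j ∈ T.filter (fun j : Fin n => (j : ℕ) < k), a j with hs
    have hsplit : ∑ j ∈ T.filter (fun j : Fin n => (j : ℕ) < k + 1), a j =
        s + (if i ∈ T then a i else 0) := by
      by_cases hiT : i ∈ T
      · rw [if_pos hiT]
        have hset : T.filter (fun j : Fin n => (j : ℕ) < k + 1) =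
            insert i (T.filter (fun j : Fin n => (j : ℕ) < k)) := by
          ext j
          simp only [Finset.mem_filter, Finset.mem_insert]
          constructor
          · rintro ⟨hjT, hjk⟩
            by_cases hji : (j : ℕ) = k
            · left; exact Fin.ext (show (j:ℕ) = (i:ℕ) from hji)
            · right; exact ⟨hjT, by omega⟩
          · rintro (rfl | ⟨hjT, hjk⟩)
            · exact ⟨hiT, by simp [hi]⟩
            · exact ⟨hjT, by omega⟩
        rw [hset, Finset.sum_insert (by simp [Finset.mem_filter, hi])]
        omega
      · rw [if_neg hiT]
        congr 1
        ext j
        simp only [Finset.mem_filter]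
        constructor
        · rintro ⟨hjT, hjk⟩
          refine ⟨hjT, ?_⟩
          by_cases hji : (j : ℕ) = k
          · exact absurd (Fin.ext (show (j:ℕ) = (i:ℕ) from hji) ▸ hjT) hiT
          · omega
        · rintro ⟨hjT, hjk⟩; exact ⟨hjT, by omega⟩
    have hcastA : (⟨k, by omega⟩ : Fin (n + 1)) = i.castSucc := rfl
    have hsuccA : i.succ = (⟨k + 1, by omega⟩ : Fin (n + 1)) := rfl
    have hedgeA : (i.castSucc, ([] : TGuard Empty), OpA.write i, (∅ : Finset Empty),
        i.succ) ∈ (ssCTA n a c).edgesA := Set.mem_setOf.mpr ⟨i, rfl⟩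
    have hgA : TGuard.satN ([] : TGuard Empty) νE := by intro p hp; simp at hp
    by_cases hiT : i ∈ T
    · -- include: time a i, write, read with x = a i
      have h1 : ReachT (ssCTA n a c) (s + a i)
          ((⟨k, by omega⟩, νE), (Sum.inl ⟨k, by omega⟩, νC (a i) (s + a i)), []) := by
        have := ReachT.step hreach
          (StepD.time (a i) (⟨k, by omega⟩ : Fin (n+1)) νE (Sum.inl (⟨k, by omega⟩ : Fin (n+1))) (νC 0 s) [])
        simpa [νE_add, νC_add] using this
      have h2 : ReachT (ssCTA n a c) (s + a i)
          ((⟨k + 1, by omega⟩, νE),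
           (Sum.inl ⟨k, by omega⟩, νC (a i) (s + a i)), [(i, 0)]) := by
        have := ReachT.step h1
          (StepD.awrite (Sum.inl ⟨k, by omega⟩) (νC (a i) (s + a i)) []
            (hcastA ▸ hedgeA) hgA)
        simpa [νE_reset, hsuccA] using this
      have hedgeB : (Sum.inl i.castSucc, [(BClock.x, CmpOp.eq, a i)],
          OpB.read i Set.univ, ({BClock.x} : Finset BClock), Sum.inl i.succ) ∈
          (ssCTA n a c).edgesB := Set.mem_union_left _ (Set.mem_union_left _ (Set.mem_setOf.mpr ⟨i, rfl⟩))
      have hgB : TGuard.satN [(BClock.x, CmpOp.eq, a i)] (νC (a i) (s + a i)) := by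
        intro p hp; simp only [List.mem_singleton] at hp; subst hp
        simp [CmpOp.satN, νC]
      have h3 : ReachT (ssCTA n a c) (s + a i)
          ((⟨k + 1, by omega⟩, νE),
           (Sum.inl ⟨k + 1, by omega⟩, νC 0 (s + a i)), []) := by
        have := ReachT.step h2
          (StepD.bread (t := 0) (⟨k + 1, by omega⟩ : Fin (n + 1)) νE []
            (hcastA ▸ hedgeB) hgB (Set.mem_univ 0))
        simpa [νC_reset_x, νC_reset_x', hsuccA] using this
      rw [hsplit, if_pos hiT]
      exact h3
    · -- exclude: write, read with x = 0
      have h2 : ReachT (ssCTA n a c) s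
          ((⟨k + 1, by omega⟩, νE), (Sum.inl ⟨k, by omega⟩, νC 0 s), [(i, 0)]) := by
        have := ReachT.step hreach
          (StepD.awrite (Sum.inl ⟨k, by omega⟩) (νC 0 s) [] (hcastA ▸ hedgeA) hgA)
        simpa [νE_reset, hsuccA] using this
      have hedgeB : (Sum.inl i.castSucc, [(BClock.x, CmpOp.eq, 0)],
          OpB.read i Set.univ, (∅ : Finset BClock), Sum.inl i.succ) ∈
          (ssCTA n a c).edgesB := Set.mem_union_left _ (Set.mem_union_right _ (Set.mem_setOf.mpr ⟨i, rfl⟩))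
      have hgB : TGuard.satN [(BClock.x, CmpOp.eq, 0)] (νC 0 s) := by
        intro p hp; simp only [List.mem_singleton] at hp; subst hp
        simp [CmpOp.satN, νC]
      have h3 : ReachT (ssCTA n a c) s
          ((⟨k + 1, by omega⟩, νE), (Sum.inl ⟨k + 1, by omega⟩, νC 0 s), []) := by
        have := ReachT.step h2
          (StepD.bread (t := 0) (⟨k + 1, by omega⟩ : Fin (n + 1)) νE []
            (hcastA ▸ hedgeB) hgB (Set.mem_univ 0))
        simpa [νC_reset_none, hsuccA] using this
      rw [hsplit, if_neg hiT]
      simpa using h3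

/-- subset sum reduces to reachability in a two-process CTA: the location
`r_f` is reachable in the CTA constructed from positive integers `a₁,…,aₙ` and target `c`
iff some subset of the `aᵢ` sums to `c`. -/
theorem stmt7 (n : ℕ) (a : Fin n → ℕ) (ha : ∀ i, 0 < a i) (c : ℕ) :
    (∃ (T : ℕ) (lA : Fin (n + 1)) (νA : Empty → ℕ) (νB : BClock → ℕ)
        (w : List (Fin n × ℕ)),
        ReachT (ssCTA n a c) T ((lA, νA), (Sum.inr (), νB), w)) ↔
    (∃ T : Finset (Fin n), ∑ i ∈ T, a i = c) := by
  constructor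
  · rintro ⟨T, lA, νA, νB, w, hreach⟩
    exact reach_inv hreach
  · rintro ⟨T, hT⟩
    have hfilter : T.filter (fun j : Fin n => (j : ℕ) < n) = T := by
      ext j; simp [j.isLt]
    have hrun := run_lemma a c T n le_rfl
    rw [hfilter, hT] at hrun
    have hlast : (⟨n, by omega⟩ : Fin (n + 1)) = Fin.last n := rfl
    have hedge : (Sum.inl (Fin.last n),
        [(BClock.x, CmpOp.eq, 0), (BClock.y, CmpOp.eq, c)],
        (OpB.nop : OpB (Fin n)), (∅ : Finset BClock), Sum.inr ()) ∈
        (ssCTA n a c).edgesB := Set.mem_union_right _ rfl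
    have hg : TGuard.satN [(BClock.x, CmpOp.eq, 0), (BClock.y, CmpOp.eq, c)]
        (νC 0 c) := by
      intro p hp
      simp only [List.mem_cons, List.not_mem_nil, or_false] at hp
      rcases hp with rfl | rfl <;> simp [CmpOp.satN, νC]
    have hstep := ReachT.step hrun
      (StepD.bnop (⟨n, by omega⟩ : Fin (n + 1)) νE [] (hlast ▸ hedge) hg)
    exact ⟨c + 0, ⟨n, by omega⟩, νE, _, [], hstep⟩
end

section
/- In the subset sum CTA gadget, if B reaches r_f then the value of clock y at r_f equals the sum of the times spent at locations r_{aᵢ} where the 'include' branch was taken, and each such time equals aᵢ; hence y = Σ_{i∈T} aᵢ for the set T of included indices. -/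
/-- in the subset-sum CTA gadget, `B` traverses `r_{a₀},…,r_{a_{n-1}}` making
at each index `i` a branch choice `b i` (include/exclude) and spending `d i` time units
there.  Clock `x` satisfies: on an include branch `x + d = aᵢ` and `x` is reset; on an
exclude branch `x + d = 0` and `x` is unchanged.  Clock `y` is never reset and accumulates
all elapsed time.  Then each include wait equals `aᵢ`, and the value of `y` on reaching
`r_f` equals the sum of the included `aᵢ`. -/
theorem stmt8 (n : ℕ) (a : ℕ → ℕ) (b : ℕ → Bool) (d : ℕ → ℕ) (x y : ℕ → ℕ)
    (hx0 : x 0 = 0) (hy0 : y 0 = 0)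
    (hinc : ∀ i < n, b i = true → x i + d i = a i ∧ x (i + 1) = 0)
    (hexc : ∀ i < n, b i = false → x i + d i = 0 ∧ x (i + 1) = x i + d i)
    (hy : ∀ i < n, y (i + 1) = y i + d i) :
    (∀ i < n, b i = true → d i = a i) ∧
    y n = ∑ i ∈ (Finset.range n).filter (fun i => b i = true), a i := by

  have hxz : ∀ i ≤ n, x i = 0 := by
    intro i hi
    induction i with
    | zero => exact hx0
    | succ k ih =>
      have hk : k < n := lt_of_lt_of_le (Nat.lt_succ_self k) hi
      have hxk := ih (le_of_lt hk)
      cases hb : b k with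
      | true => exact (hinc k hk hb).2
      | false =>
        have := hexc k hk hb
        rw [this.2, this.1]
  have hd : ∀ i < n, b i = true → d i = a i := by
    intro i hi hb
    have := (hinc i hi hb).1
    rw [hxz i (le_of_lt hi)] at this
    simpa using this
  refine ⟨hd, ?_⟩
  have key : ∀ m ≤ n, y m = ∑ i ∈ (Finset.range m).filter (fun i => b i = true), a i := by
    intro m hm
    induction m with
    | zero => simpa using hy0
    | succ k ih =>
      have hk : k < n := lt_of_lt_of_le (Nat.lt_succ_self k) hm
      rw [hy k hk, ih (le_of_lt hk), Finset.range_add_one, Finset.filter_insert]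
      cases hb : b k with
      | true =>
        rw [if_pos rfl, Finset.sum_insert (by simp), hd k hk hb, Nat.add_comm]
      | false =>
        have hd0 : d k = 0 := by
          have := (hexc k hk hb).1
          omega
        rw [if_neg (by simp), hd0, Nat.add_zero]
  exact key n le_rfl
end

section
/- In the one-counter-automaton simulation of a two-process CTA (A writing to B over one channel), the invariant holds: whenever the simulation is in configuration ((l_A,ν_A),(l_B,ν_B,a),i) with stack content 1^j⊥, the automaton B is i+j time units ahead of A, and the pending message a has age i+j as seen from B. -/
/-- Reachable configurations of the one-counter simulation of a two-process CTA, recording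
the finite-control counter component `i ∈ {0,…,K}`, the number `j` of `1`s on the unary
stack, the total times `tA`, `tB` elapsed in `A` and in `B`, and the pending message (if
any) written by `A` and not yet read by `B`, together with its age as seen from `B`.
Each unit time elapse of `B` increments the encoded counter (into `i` below `K`, onto the
stack at `K`) and ages the pending message; each unit time elapse of `A` (only allowed
when no message is pending, and only when the counter is positive, so `B` never falls
behind `A`) decrements it; a write records the current time difference as the message's
age; a read removes the pending message. -/
inductive SimReach (K : ℕ) : ℕ → ℕ → ℕ → ℕ → Option ℕ → Prop
  | init : SimReach K 0 0 0 0 none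
  | btickSmall {i j tA tB p} : SimReach K i j tA tB p → i < K →
      SimReach K (i + 1) j tA (tB + 1) (p.map (· + 1))
  | btickBig {j tA tB p} : SimReach K K j tA tB p →
      SimReach K K (j + 1) tA (tB + 1) (p.map (· + 1))
  | atickPop {j tA tB} : SimReach K K (j + 1) tA tB none →
      SimReach K K j (tA + 1) tB none
  | atickDec {i tA tB} : SimReach K (i + 1) 0 tA tB none →
      SimReach K i 0 (tA + 1) tB none
  | write {i j tA tB} : SimReach K i j tA tB none →
      SimReach K i j tA tB (some (tB - tA))
  | read {i j tA tB ag} : SimReach K i j tA tB (some ag) →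
      SimReach K i j tA tB none

/-- the simulation invariant: in any reachable simulation configuration with
finite-control value `i` and stack content `1^j⊥`, automaton `B` is exactly `i + j` time
units ahead of `A`, and the pending message (if any) has age `i + j` as seen from `B`. -/
theorem stmt11 (K i j tA tB : ℕ) (p : Option ℕ) (h : SimReach K i j tA tB p) :
    tB = tA + (i + j) ∧ ∀ ag, p = some ag → ag = i + j := by
  induction h with
  | init => simp
  | btickSmall h _ ih =>
      obtain ⟨h1, h2⟩ := ih
      refine ⟨by omega, ?_⟩
      rintro ag hag
      simp [Option.map_eq_some_iff] at hag
      obtain ⟨a, ha, rfl⟩ := hag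
      have := h2 a ha
      omega
  | btickBig h ih =>
      obtain ⟨h1, h2⟩ := ih
      refine ⟨by omega, ?_⟩
      rintro ag hag
      simp [Option.map_eq_some_iff] at hag
      obtain ⟨a, ha, rfl⟩ := hag
      have := h2 a ha
      omega
  | atickPop h ih => exact ⟨by omega, by simp⟩
  | atickDec h ih => exact ⟨by omega, by simp⟩
  | write h ih =>
      refine ⟨ih.1, ?_⟩
      rintro ag ⟨rfl⟩
      omega
  | read h ih => exact ⟨ih.1, by simp⟩
end

section
/- Reversing a stack preserves content with ages: if stack W contains, from bottom to top, the sequence m₁, d₁, m₂, d₂, …, m_p, d_p (messages mᵢ ∈ Σ and inter-write delays dᵢ ∈ ℕ, with d_i the delay after m_i), then popping W while accumulating delays and pushing (m, accumulated delay) onto stack R yields R containing, from bottom to top, (m_p, d_p), (m_{p−1}, d_{p−1}+d_p), …, (m₁, d₁+⋯+d_p); i.e., each message is paired with exactly the total time elapsed since it was written. -/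
/-- Transfer of a write stack into a read stack.  The input list is the write stack read
from top to bottom, grouped into pairs `(m, d)` where the delay symbol `d` lies directly
above the message `m`.  Popping accumulates the delays and pushes each message paired with
the accumulated delay; the output list is the resulting read stack from bottom to top
(in push order). -/
def transfer {α : Type} (acc : ℕ) : List (α × ℕ) → List (α × ℕ)
  | [] => []
  | (m, d) :: rest => (m, acc + d) :: transfer (acc + d) rest

lemma transfer_gen {α : Type} (ms : ℕ → α) (ds : ℕ → ℕ) (p : ℕ) (acc : ℕ) :
    transfer acc (((List.range p).map fun i => (ms i, ds i)).reverse) =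
      (List.range p).reverse.map fun i => (ms i, acc + ∑ j ∈ Finset.Ico i p, ds j) := by
  induction p generalizing acc with
  | zero => simp [transfer]
  | succ n ih =>
    rw [List.range_succ]
    simp only [List.map_append, List.reverse_append, List.map_cons, List.map_nil,
      List.reverse_cons, List.reverse_nil, List.nil_append, List.cons_append]
    rw [transfer, ih]
    congr 1
    · simp [Nat.Ico_succ_singleton]
    · apply List.map_congr_left
      intro i hi
      simp only [List.mem_reverse, List.mem_range] at hi
      have h : Finset.Ico i (n + 1) = insert n (Finset.Ico i n) := by
        rw [Finset.Ico_insert_right (by omega : i ≤ n), Finset.Ico_add_one_right_eq_Icc]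
      rw [h, Finset.sum_insert (by simp)]
      simp; ring

/-- if the write stack contains, from bottom to top,
`m₁, d₁, m₂, d₂, …, m_p, d_p` (here `mᵢ = ms i`, `dᵢ = ds i`, indices `0,…,p−1`), then the
transfer yields the read stack containing, from bottom to top,
`(m_p, d_p), (m_{p−1}, d_{p−1}+d_p), …, (m₁, d₁+⋯+d_p)`: each message is paired with
exactly the total delay elapsed since it was written. -/
theorem stmt14 {α : Type} (p : ℕ) (ms : ℕ → α) (ds : ℕ → ℕ) :
    transfer 0 (((List.range p).map fun i => (ms i, ds i)).reverse) =
      (List.range p).reverse.map fun i => (ms i, ∑ j ∈ Finset.Ico i p, ds j) := by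
  simpa using transfer_gen ms ds p 0
end

section
/- In a two-process CTA (A writing to B, no global clocks), reachability is invariant under de-synchronization: a configuration with empty channel ((l_A,ν_A),(l_B,ν_B),ε) is reachable in the synchronous semantics iff it is reachable in the semantics where A is frozen after each write until B has read that message, with B allowed to elapse time independently of A, provided A later elapses the same total time. -/
variable {LA LB XA XB α : Type} [DecidableEq XA] [DecidableEq XB]

/-- A transition of the synchronous CTA semantics, of arbitrary duration. -/
def Step (M : TwoCTA LA LB XA XB α) (γ γ' : Conf2 LA LB XA XB α) : Prop :=
  ∃ t, StepD M t γ γ'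

/-- Configurations of the de-synchronized semantics: each process carries its own total
elapsed local time, and at most one message (with its age as seen from `B`) is pending. -/
abbrev DConf (LA LB XA XB α : Type) :=
  (LA × (XA → ℕ) × ℕ) × (LB × (XB → ℕ) × ℕ) × Option (α × ℕ)

/-- De-synchronized semantics: `A` is frozen after each write until `B` has read the
pending message (all `A`-moves require no pending message), `B` elapses time
independently, `A` never overtakes `B`, and a write records as age the current difference
of the local times of `B` and `A`. -/
inductive DStep (M : TwoCTA LA LB XA XB α) :
    DConf LA LB XA XB α → DConf LA LB XA XB α → Prop
  | atime {lA : LA} {νA : XA → ℕ} {τA : ℕ} (t : ℕ) (sB : LB × (XB → ℕ) × ℕ) :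
      τA + t ≤ sB.2.2 →
      DStep M ((lA, νA, τA), sB, none)
        ((lA, fun x => νA x + t, τA + t), sB, none)
  | anop {lA : LA} {νA : XA → ℕ} {τA : ℕ} {g : TGuard XA} {Y : Finset XA} {lA' : LA}
      (sB : LB × (XB → ℕ) × ℕ) :
      (lA, g, OpA.nop, Y, lA') ∈ M.edgesA → TGuard.satN g νA →
      DStep M ((lA, νA, τA), sB, none)
        ((lA', fun x => if x ∈ Y then 0 else νA x, τA), sB, none)
  | awrite {lA : LA} {νA : XA → ℕ} {τA : ℕ} {g : TGuard XA} {a : α} {Y : Finset XA}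
      {lA' : LA} (sB : LB × (XB → ℕ) × ℕ) :
      (lA, g, OpA.write a, Y, lA') ∈ M.edgesA → TGuard.satN g νA → τA ≤ sB.2.2 →
      DStep M ((lA, νA, τA), sB, none)
        ((lA', fun x => if x ∈ Y then 0 else νA x, τA), sB, some (a, sB.2.2 - τA))
  | btime {lB : LB} {νB : XB → ℕ} {τB : ℕ} (t : ℕ) (sA : LA × (XA → ℕ) × ℕ)
      (p : Option (α × ℕ)) :
      DStep M (sA, (lB, νB, τB), p)
        (sA, (lB, fun x => νB x + t, τB + t), p.map fun q => (q.1, q.2 + t))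
  | bnop {lB : LB} {νB : XB → ℕ} {τB : ℕ} {g : TGuard XB} {Y : Finset XB} {lB' : LB}
      (sA : LA × (XA → ℕ) × ℕ) (p : Option (α × ℕ)) :
      (lB, g, OpB.nop, Y, lB') ∈ M.edgesB → TGuard.satN g νB →
      DStep M (sA, (lB, νB, τB), p)
        (sA, (lB', fun x => if x ∈ Y then 0 else νB x, τB), p)
  | bread {lB : LB} {νB : XB → ℕ} {τB : ℕ} {g : TGuard XB} {a : α} {I : Set ℕ}
      {Y : Finset XB} {lB' : LB} {ag : ℕ} (sA : LA × (XA → ℕ) × ℕ) :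
      (lB, g, OpB.read a I, Y, lB') ∈ M.edgesB → TGuard.satN g νB → ag ∈ I →
      DStep M (sA, (lB, νB, τB), some (a, ag))
        (sA, (lB', fun x => if x ∈ Y then 0 else νB x, τB), none)


/-! ### Auxiliary development -/

section Aux

variable {M : TwoCTA LA LB XA XB α}

/-- Local runs of `A` (sized), recording writes with their local timestamps. -/
inductive ASeg (M : TwoCTA LA LB XA XB α) :
    ℕ → (LA × (XA → ℕ) × ℕ) → List (α × ℕ) → (LA × (XA → ℕ) × ℕ) → Prop
  | nil (s : LA × (XA → ℕ) × ℕ) : ASeg M 0 s [] s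
  | time {n : ℕ} {l : LA} {ν : XA → ℕ} {τ : ℕ} {tr : List (α × ℕ)}
      {s' : LA × (XA → ℕ) × ℕ} (t : ℕ) :
      ASeg M n (l, (fun x => ν x + t), τ + t) tr s' → ASeg M (n+1) (l, ν, τ) tr s'
  | nop {n : ℕ} {l : LA} {ν : XA → ℕ} {τ : ℕ} {g : TGuard XA} {Y : Finset XA} {l' : LA}
      {tr : List (α × ℕ)} {s' : LA × (XA → ℕ) × ℕ} :
      (l, g, OpA.nop, Y, l') ∈ M.edgesA → TGuard.satN g ν →
      ASeg M n (l', (fun x => if x ∈ Y then 0 else ν x), τ) tr s' →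
      ASeg M (n+1) (l, ν, τ) tr s'
  | write {n : ℕ} {l : LA} {ν : XA → ℕ} {τ : ℕ} {g : TGuard XA} {a : α} {Y : Finset XA}
      {l' : LA} {tr : List (α × ℕ)} {s' : LA × (XA → ℕ) × ℕ} :
      (l, g, OpA.write a, Y, l') ∈ M.edgesA → TGuard.satN g ν →
      ASeg M n (l', (fun x => if x ∈ Y then 0 else ν x), τ) tr s' →
      ASeg M (n+1) (l, ν, τ) ((a, τ) :: tr) s'

/-- Local runs of `B` (sized), recording reads with interval and local timestamp. -/
inductive BSeg (M : TwoCTA LA LB XA XB α) :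
    ℕ → (LB × (XB → ℕ) × ℕ) → List (α × Set ℕ × ℕ) → (LB × (XB → ℕ) × ℕ) → Prop
  | nil (s : LB × (XB → ℕ) × ℕ) : BSeg M 0 s [] s
  | time {n : ℕ} {l : LB} {ν : XB → ℕ} {τ : ℕ} {tr : List (α × Set ℕ × ℕ)}
      {s' : LB × (XB → ℕ) × ℕ} (t : ℕ) :
      BSeg M n (l, (fun x => ν x + t), τ + t) tr s' → BSeg M (n+1) (l, ν, τ) tr s'
  | nop {n : ℕ} {l : LB} {ν : XB → ℕ} {τ : ℕ} {g : TGuard XB} {Y : Finset XB} {l' : LB}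
      {tr : List (α × Set ℕ × ℕ)} {s' : LB × (XB → ℕ) × ℕ} :
      (l, g, OpB.nop, Y, l') ∈ M.edgesB → TGuard.satN g ν →
      BSeg M n (l', (fun x => if x ∈ Y then 0 else ν x), τ) tr s' →
      BSeg M (n+1) (l, ν, τ) tr s'
  | read {n : ℕ} {l : LB} {ν : XB → ℕ} {τ : ℕ} {g : TGuard XB} {a : α} {I : Set ℕ}
      {Y : Finset XB} {l' : LB} {tr : List (α × Set ℕ × ℕ)} {s' : LB × (XB → ℕ) × ℕ} :
      (l, g, OpB.read a I, Y, l') ∈ M.edgesB → TGuard.satN g ν →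
      BSeg M n (l', (fun x => if x ∈ Y then 0 else ν x), τ) tr s' →
      BSeg M (n+1) (l, ν, τ) ((a, I, τ) :: tr) s'

theorem ASeg.mono {n s tr s'} (h : ASeg M n s tr s') : s.2.2 ≤ s'.2.2 := by
  induction h with
  | nil => exact le_refl _
  | time t _ ih => exact le_trans (Nat.le_add_right _ _) ih
  | nop _ _ _ ih => exact ih
  | write _ _ _ ih => exact ih

theorem BSeg.mono {n s tr s'} (h : BSeg M n s tr s') : s.2.2 ≤ s'.2.2 := by
  induction h with
  | nil => exact le_refl _
  | time t _ ih => exact le_trans (Nat.le_add_right _ _) ih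
  | nop _ _ _ ih => exact ih
  | read _ _ _ ih => exact ih

theorem ASeg.lb {n s tr s'} (h : ASeg M n s tr s') : ∀ x ∈ tr, s.2.2 ≤ x.2 := by
  induction h with
  | nil => intro x hx; cases hx
  | time t _ ih => intro x hx; exact le_trans (Nat.le_add_right _ _) (ih x hx)
  | nop _ _ _ ih => exact ih
  | write _ _ _ ih =>
      intro x hx
      rcases List.mem_cons.1 hx with h | h
      · subst h; exact le_refl _
      · exact ih x h

theorem BSeg.lb {n s tr s'} (h : BSeg M n s tr s') : ∀ x ∈ tr, s.2.2 ≤ x.2.2 := by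
  induction h with
  | nil => intro x hx; cases hx
  | time t _ ih => intro x hx; exact le_trans (Nat.le_add_right _ _) (ih x hx)
  | nop _ _ _ ih => exact ih
  | read _ _ _ ih =>
      intro x hx
      rcases List.mem_cons.1 hx with h | h
      · subst h; exact le_refl _
      · exact ih x h

theorem ASeg.trans {m n s t₁ s₂ t₂ s₃} (h₁ : ASeg M m s t₁ s₂) (h₂ : ASeg M n s₂ t₂ s₃) :
    ∃ k, ASeg M k s (t₁ ++ t₂) s₃ := by
  induction h₁ with
  | nil => exact ⟨n, h₂⟩
  | time t _ ih => rcases ih h₂ with ⟨k, hk⟩; exact ⟨k+1, .time t hk⟩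
  | nop he hg _ ih => rcases ih h₂ with ⟨k, hk⟩; exact ⟨k+1, .nop he hg hk⟩
  | write he hg _ ih => rcases ih h₂ with ⟨k, hk⟩; exact ⟨k+1, .write he hg hk⟩

theorem BSeg.trans {m n s t₁ s₂ t₂ s₃} (h₁ : BSeg M m s t₁ s₂) (h₂ : BSeg M n s₂ t₂ s₃) :
    ∃ k, BSeg M k s (t₁ ++ t₂) s₃ := by
  induction h₁ with
  | nil => exact ⟨n, h₂⟩
  | time t _ ih => rcases ih h₂ with ⟨k, hk⟩; exact ⟨k+1, .time t hk⟩
  | nop he hg _ ih => rcases ih h₂ with ⟨k, hk⟩; exact ⟨k+1, .nop he hg hk⟩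
  | read he hg _ ih => rcases ih h₂ with ⟨k, hk⟩; exact ⟨k+1, .read he hg hk⟩

theorem ASeg.headWrite {n s tr0 s'} (h : ASeg M n s tr0 s') :
    ∀ a σ tr, tr0 = (a, σ) :: tr →
    ∃ k₁ k₂ l ν g Y l₂, ASeg M k₁ s [] (l, ν, σ) ∧
      (l, g, OpA.write a, Y, l₂) ∈ M.edgesA ∧ TGuard.satN g ν ∧
      ASeg M k₂ (l₂, (fun x => if x ∈ Y then 0 else ν x), σ) tr s' := by
  induction h with
  | nil => intro a σ tr h; cases h
  | time t _ ih =>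
      intro a σ tr h
      rcases ih a σ tr h with ⟨k₁, k₂, l, ν, g, Y, l₂, h1, h2, h3, h4⟩
      exact ⟨k₁+1, k₂, l, ν, g, Y, l₂, .time t h1, h2, h3, h4⟩
  | nop he hg _ ih =>
      intro a σ tr h
      rcases ih a σ tr h with ⟨k₁, k₂, l, ν, g, Y, l₂, h1, h2, h3, h4⟩
      exact ⟨k₁+1, k₂, l, ν, g, Y, l₂, .nop he hg h1, h2, h3, h4⟩
  | @write n l ν τ g a' Y l' tr' s' he hg hrest ih =>
      intro a σ tr h
      injection h with h1 h2
      injection h1 with ha hτ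
      subst ha; subst hτ; subst h2
      exact ⟨0, n, l, ν, g, Y, l', .nil _, he, hg, hrest⟩

theorem BSeg.headRead {n s tr0 s'} (h : BSeg M n s tr0 s') :
    ∀ a I r tr, tr0 = (a, I, r) :: tr →
    ∃ k₁ k₂ l ν g Y l₂, BSeg M k₁ s [] (l, ν, r) ∧
      (l, g, OpB.read a I, Y, l₂) ∈ M.edgesB ∧ TGuard.satN g ν ∧
      BSeg M k₂ (l₂, (fun x => if x ∈ Y then 0 else ν x), r) tr s' := by
  induction h with
  | nil => intro a I r tr h; cases h
  | time t _ ih =>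
      intro a I r tr h
      rcases ih a I r tr h with ⟨k₁, k₂, l, ν, g, Y, l₂, h1, h2, h3, h4⟩
      exact ⟨k₁+1, k₂, l, ν, g, Y, l₂, .time t h1, h2, h3, h4⟩
  | nop he hg _ ih =>
      intro a I r tr h
      rcases ih a I r tr h with ⟨k₁, k₂, l, ν, g, Y, l₂, h1, h2, h3, h4⟩
      exact ⟨k₁+1, k₂, l, ν, g, Y, l₂, .nop he hg h1, h2, h3, h4⟩
  | @read n l ν τ g a' I' Y l' tr' s' he hg hrest ih =>
      intro a I r tr h
      injection h with h1 h2
      injection h1 with ha hIr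
      injection hIr with hI hr
      subst ha; subst hI; subst hr; subst h2
      exact ⟨0, n, l, ν, g, Y, l', .nil _, he, hg, hrest⟩

/-- Splitting a read-free `B`-segment at an intermediate time `u`. -/
theorem BSeg.splitAt {n s s'} (h : BSeg M n s [] s') :
    ∀ u, s.2.2 ≤ u → u ≤ s'.2.2 →
    ∃ k₁ k₂ m, BSeg M k₁ s [] m ∧ BSeg M k₂ m [] s' ∧ m.2.2 = u := by
  have aux : ∀ {n s tr s'}, BSeg M n s tr s' → tr = [] → ∀ u, s.2.2 ≤ u → u ≤ s'.2.2 →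
      ∃ k₁ k₂ m, BSeg M k₁ s [] m ∧ BSeg M k₂ m [] s' ∧ m.2.2 = u := by
    intro n s tr s' h
    induction h with
    | nil =>
        intro _ u h1 h2
        exact ⟨0, 0, _, .nil _, .nil _, le_antisymm h1 h2⟩
    | @time n l ν τ tr s' t hrest ih =>
        intro htr u h1 h2
        have h1' : τ ≤ u := h1
        rcases le_or_gt u (τ + t) with hu | hu
        · refine ⟨1, n+1, (l, (fun x => ν x + (u - τ)), u), ?_, ?_, rfl⟩
          · have h0 : τ + (u - τ) = u := by omega
            have hh := BSeg.time (M := M) (u - τ)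
              (BSeg.nil (l, fun x => ν x + (u - τ), τ + (u - τ)))
            rwa [h0] at hh
          · refine BSeg.time (t - (u - τ)) ?_
            have hf : (fun x => (fun x => ν x + (u - τ)) x + (t - (u - τ))) =
                (fun x => ν x + t) := by funext x; simp only []; omega
            have ht : u + (t - (u - τ)) = τ + t := by omega
            rw [hf, ht]; exact htr ▸ hrest
        · have h2' : τ + t ≤ u := by omega
          rcases ih htr u h2' h2 with ⟨k₁, k₂, m, hm1, hm2, hm3⟩
          exact ⟨k₁+1, k₂, m, .time t hm1, hm2, hm3⟩
    | @nop n l ν τ g Y l' tr s' he hg hrest ih =>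
        intro htr u h1 h2
        rcases ih htr u h1 h2 with ⟨k₁, k₂, m, hm1, hm2, hm3⟩
        exact ⟨k₁+1, k₂, m, .nop he hg hm1, hm2, hm3⟩
    | read he hg hrest ih => intro htr; cases htr
  exact aux h rfl

/-- Replay a write-free `A`-segment in the desynchronized semantics. -/
theorem ASeg.replayD {n s s'} (h : ASeg M n s [] s') :
    ∀ sB : LB × (XB → ℕ) × ℕ, s'.2.2 ≤ sB.2.2 →
    Relation.ReflTransGen (DStep M) (s, sB, none) (s', sB, none) := by
  have aux : ∀ {n s tr s'}, ASeg M n s tr s' → tr = [] →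
      ∀ sB : LB × (XB → ℕ) × ℕ, s'.2.2 ≤ sB.2.2 →
      Relation.ReflTransGen (DStep M) (s, sB, none) (s', sB, none) := by
    intro n s tr s' h
    induction h with
    | nil => intro _ sB _; exact .refl
    | @time n l ν τ tr s' t hrest ih =>
        intro htr sB hle
        refine Relation.ReflTransGen.head (DStep.atime t sB ?_) (ih htr sB hle)
        exact le_trans hrest.mono hle
    | nop he hg _ ih =>
        intro htr sB hle
        exact Relation.ReflTransGen.head (DStep.anop sB he hg) (ih htr sB hle)
    | write _ _ _ _ => intro htr; cases htr
  exact aux h rfl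

/-- Replay a read-free `B`-segment in the desynchronized semantics, no pending message. -/
theorem BSeg.replayD_none {n s s'} (h : BSeg M n s [] s') :
    ∀ sA : LA × (XA → ℕ) × ℕ,
    Relation.ReflTransGen (DStep M) (sA, s, none) (sA, s', none) := by
  have aux : ∀ {n s tr s'}, BSeg M n s tr s' → tr = [] →
      ∀ sA : LA × (XA → ℕ) × ℕ,
      Relation.ReflTransGen (DStep M) (sA, s, none) (sA, s', none) := by
    intro n s tr s' h
    induction h with
    | nil => intro _ sA; exact .refl
    | @time n l ν τ tr s' t hrest ih =>
        intro htr sA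
        refine Relation.ReflTransGen.head ?_ (ih htr sA)
        have h := DStep.btime (M := M) (lB := l) (νB := ν) (τB := τ) t sA
          (none : Option (α × ℕ))
        simpa using h
    | nop he hg _ ih =>
        intro htr sA
        exact Relation.ReflTransGen.head (DStep.bnop sA none he hg) (ih htr sA)
    | read _ _ _ _ => intro htr; cases htr
  exact aux h rfl

/-- Replay a read-free `B`-segment in the desynchronized semantics, aging the pending
message. -/
theorem BSeg.replayD_some {n s s'} (h : BSeg M n s [] s') :
    ∀ (sA : LA × (XA → ℕ) × ℕ) (a : α) (ag : ℕ),
    Relation.ReflTransGen (DStep M) (sA, s, some (a, ag))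
      (sA, s', some (a, ag + (s'.2.2 - s.2.2))) := by
  have aux : ∀ {n s tr s'}, BSeg M n s tr s' → tr = [] →
      ∀ (sA : LA × (XA → ℕ) × ℕ) (a : α) (ag : ℕ),
      Relation.ReflTransGen (DStep M) (sA, s, some (a, ag))
        (sA, s', some (a, ag + (s'.2.2 - s.2.2))) := by
    intro n s tr s' h
    induction h with
    | nil => intro _ sA a ag; simp only [Nat.sub_self, Nat.add_zero]; exact .refl
    | @time n l ν τ tr s' t hrest ih =>
        intro htr sA a ag
        have hstep : DStep M (sA, (l, ν, τ), some (a, ag))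
            (sA, (l, fun x => ν x + t, τ + t), some (a, ag + t)) := by
          simpa using DStep.btime (M := M) (lB := l) (νB := ν) (τB := τ) t sA (some (a, ag))
        have h2 := ih htr sA a (ag + t)
        have hm : τ + t ≤ s'.2.2 := hrest.mono
        have harith : ag + t + (s'.2.2 - (τ + t)) = ag + (s'.2.2 - τ) := by omega
        simp only at h2 ⊢
        rw [← harith]
        exact Relation.ReflTransGen.head hstep h2
    | nop he hg _ ih =>
        intro htr sA a ag
        exact Relation.ReflTransGen.head (DStep.bnop sA _ he hg) (ih htr sA a ag)
    | read _ _ _ _ => intro htr; cases htr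
  exact aux h rfl

/-- The matching relation between a write event and a read event. -/
def MR : (α × ℕ) → (α × Set ℕ × ℕ) → Prop :=
  fun wr rd => wr.1 = rd.1 ∧ wr.2 ≤ rd.2.2 ∧ rd.2.2 - wr.2 ∈ rd.2.1

/-- Merging matched local runs into a desynchronized run. -/
theorem dmerge : ∀ {trA trB}, List.Forall₂ (MR (α := α)) trA trB →
    ∀ {nA nB sA sB eA eB}, ASeg M nA sA trA eA → BSeg M nB sB trB eB →
    sA.2.2 ≤ sB.2.2 → eA.2.2 = eB.2.2 →
    Relation.ReflTransGen (DStep M) (sA, sB, none) (eA, eB, none) := by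
  intro trA trB hf
  induction hf with
  | nil =>
      intro nA nB sA sB eA eB hA hB hle heq
      exact (hB.replayD_none sA).trans (hA.replayD eB (le_of_eq heq))
  | @cons wr rd trA' trB' hR hf ih =>
      intro nA nB sA sB eA eB hA hB hle heq
      obtain ⟨a, s⟩ := wr
      obtain ⟨a', I, r⟩ := rd
      obtain ⟨ha, hsr, hmem⟩ := hR
      simp only at ha hsr hmem
      subst ha
      rcases hA.headWrite a s trA' rfl with ⟨k₁, k₂, lw, νw, g, Y, l₂, hA1, hAe, hAg, hA2⟩
      rcases hB.headRead a I r trB' rfl with ⟨j₁, j₂, lr, νr, gB, YB, lB₂, hB1, hBe, hBg, hB2⟩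
      have hsBr : sB.2.2 ≤ r := hB1.mono
      rcases hB1.splitAt (max sB.2.2 s) (le_max_left _ _) (by simp; omega) with
        ⟨m₁, m₂, mid, hm1, hm2, hmu⟩
      set u := max sB.2.2 s with hu
      have hsu : s ≤ u := le_max_right _ _
      have hur : u ≤ r := by omega
      -- chain
      have step1 : Relation.ReflTransGen (DStep M) (sA, sB, none) (sA, mid, none) :=
        hm1.replayD_none sA
      obtain ⟨lmid, νmid, τmid⟩ := mid
      simp only at hmu
      subst hmu
      have step2 : Relation.ReflTransGen (DStep M) (sA, (lmid, νmid, u), none)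
          ((lw, νw, s), (lmid, νmid, u), none) :=
        hA1.replayD (lmid, νmid, u) hsu
      have step3 : DStep M ((lw, νw, s), (lmid, νmid, u), none)
          ((l₂, fun x => if x ∈ Y then 0 else νw x, s), (lmid, νmid, u), some (a, u - s)) :=
        DStep.awrite (lmid, νmid, u) hAe hAg hsu
      have step4 := hm2.replayD_some (l₂, fun x => if x ∈ Y then 0 else νw x, s) a (u - s)
      have hage : u - s + ((lr, νr, r).2.2 - u) = r - s := by simp; omega
      rw [hage] at step4
      have step5 : DStep M
          ((l₂, fun x => if x ∈ Y then 0 else νw x, s), (lr, νr, r), some (a, r - s))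
          ((l₂, fun x => if x ∈ Y then 0 else νw x, s),
            (lB₂, fun x => if x ∈ YB then 0 else νr x, r), none) :=
        DStep.bread _ hBe hBg hmem
      have rest := ih hA2 hB2 (by simp; omega) heq
      exact ((((step1.trans step2).tail step3).trans step4).tail step5).trans rest


/-- Invariant for the synchronous semantics: local runs with the matched part and the
still-unread writes corresponding to the channel content. -/
def SInv (M : TwoCTA LA LB XA XB α) (T : ℕ) (γ : Conf2 LA LB XA XB α) : Prop :=
  ∃ nA nB trM trU trB,
    ASeg M nA (M.initA, (fun _ => 0), 0) (trM ++ trU) (γ.1.1, γ.1.2, T) ∧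
    BSeg M nB (M.initB, (fun _ => 0), 0) trB (γ.2.1.1, γ.2.1.2, T) ∧
    List.Forall₂ MR trM trB ∧
    γ.2.2 = (trU.map fun x => (x.1, T - x.2)).reverse ∧
    ∀ x ∈ trU, x.2 ≤ T

theorem sInv {T : ℕ} {γ : Conf2 LA LB XA XB α} (h : ReachT M T γ) : SInv M T γ := by
  induction h with
  | init =>
      exact ⟨0, 0, [], [], [], .nil _, .nil _, .nil, rfl, by intro x hx; cases hx⟩
  | @step T γ t γ' hR hs ih =>
      cases hs with
      | time t lA νA lB νB w =>
          obtain ⟨nA, nB, trM, trU, trB, hA, hB, hM, hw, hub⟩ := ih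
          simp only at hA hB hw
          obtain ⟨kA, hA'⟩ := hA.trans (ASeg.time (M := M) t
            (ASeg.nil (lA, fun x => νA x + t, T + t)))
          rw [List.append_nil] at hA'
          obtain ⟨kB, hB'⟩ := hB.trans (BSeg.time (M := M) t
            (BSeg.nil (lB, fun x => νB x + t, T + t)))
          rw [List.append_nil] at hB'
          refine ⟨kA, kB, trM, trU, trB, hA', hB', hM, ?_, ?_⟩
          · show w.map (fun p => (p.1, p.2 + t)) = _
            rw [hw, ← List.map_reverse, ← List.map_reverse, List.map_map]
            apply List.map_congr_left
            intro x hx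
            have := hub x (List.mem_reverse.1 hx)
            simp only [Function.comp]
            have : T - x.2 + t = T + t - x.2 := by omega
            rw [this]
          · intro x hx; exact le_trans (hub x hx) (by omega)
      | anop lB νB w he hg =>
          obtain ⟨nA, nB, trM, trU, trB, hA, hB, hM, hw, hub⟩ := ih
          simp only at hA hB hw
          obtain ⟨kA, hA'⟩ := hA.trans (ASeg.nop (M := M) he hg (ASeg.nil _))
          rw [List.append_nil] at hA'
          exact ⟨kA, nB, trM, trU, trB, hA', hB, hM, hw, hub⟩
      | @awrite lA νA g a Y lA' lB νB w he hg =>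
          obtain ⟨nA, nB, trM, trU, trB, hA, hB, hM, hw, hub⟩ := ih
          simp only at hA hB hw
          obtain ⟨kA, hA'⟩ := hA.trans (ASeg.write (M := M) he hg (ASeg.nil _))
          rw [List.append_assoc] at hA'
          refine ⟨kA, nB, trM, trU ++ [(a, T)], trB, hA', hB, hM, ?_, ?_⟩
          · show (a, 0) :: w = _
            rw [hw, List.map_append, List.reverse_append]
            simp
          · intro x hx
            rcases List.mem_append.1 hx with h | h
            · exact hub x h
            · simp at h; subst h; exact le_refl _
      | bnop lA νA w he hg =>
          obtain ⟨nA, nB, trM, trU, trB, hA, hB, hM, hw, hub⟩ := ih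
          simp only at hA hB hw
          obtain ⟨kB, hB'⟩ := hB.trans (BSeg.nop (M := M) he hg (BSeg.nil _))
          rw [List.append_nil] at hB'
          exact ⟨nA, kB, trM, trU, trB, hA, hB', hM, hw, hub⟩
      | @bread lB νB g a I Y lB' t' lA νA w he hg hmem =>
          obtain ⟨nA, nB, trM, trU, trB, hA, hB, hM, hw, hub⟩ := ih
          simp only at hA hB hw
          obtain ⟨kB, hB'⟩ := hB.trans (BSeg.read (M := M) he hg (BSeg.nil _))
          cases trU with
          | nil => simp at hw
          | cons x trU'' =>
              obtain ⟨xa, xs⟩ := x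
              rw [List.map_cons, List.reverse_cons] at hw
              obtain ⟨h1, h2⟩ := List.append_inj' hw (by simp)
              simp only [List.cons.injEq, and_true] at h2
              obtain ⟨ha, ht'⟩ := Prod.mk.injEq .. ▸ h2
              refine ⟨nA, kB, trM ++ [(xa, xs)], trU'', trB ++ [(a, I, T)],
                ?_, hB', ?_, h1, ?_⟩
              · rw [List.append_assoc]
                exact hA
              · refine List.rel_append hM (List.Forall₂.cons ?_ List.Forall₂.nil)
                refine ⟨ha.symm, ?_, ?_⟩
                · exact hub (xa, xs) (by simp)
                · show T - xs ∈ I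
                  exact ht' ▸ hmem
              · intro x hx; exact hub x (by simp [hx])

/-- Invariant for the desynchronized semantics. -/
def DInv (M : TwoCTA LA LB XA XB α) (γ : DConf LA LB XA XB α) : Prop :=
  ∃ nA nB trA trB,
    ASeg M nA (M.initA, (fun _ => 0), 0) trA γ.1 ∧
    BSeg M nB (M.initB, (fun _ => 0), 0) trB γ.2.1 ∧
    γ.1.2.2 ≤ γ.2.1.2.2 ∧
    ((γ.2.2 = none ∧ List.Forall₂ MR trA trB) ∨
      (∃ a ag trA₀ s, γ.2.2 = some (a, ag) ∧ trA = trA₀ ++ [(a, s)] ∧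
        List.Forall₂ MR trA₀ trB ∧ s + ag = γ.2.1.2.2))

theorem dInv {γ : DConf LA LB XA XB α}
    (h : Relation.ReflTransGen (DStep M)
      ((M.initA, fun _ => 0, 0), (M.initB, fun _ => 0, 0), none) γ) : DInv M γ := by
  induction h with
  | refl => exact ⟨0, 0, [], [], .nil _, .nil _, le_refl _, Or.inl ⟨rfl, .nil⟩⟩
  | tail hR hs ih =>
      cases hs with
      | @atime lA νA τA t sB hle =>
          obtain ⟨nA, nB, trA, trB, hA, hB, hAB, hp⟩ := ih
          simp only at hA hB hAB hp
          rcases hp with ⟨_, hM⟩ | ⟨a, ag, trA₀, s, hp, _⟩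
          · obtain ⟨kA, hA'⟩ := hA.trans (ASeg.time (M := M) t (ASeg.nil _))
            rw [List.append_nil] at hA'
            exact ⟨kA, nB, trA, trB, hA', hB, hle, Or.inl ⟨rfl, hM⟩⟩
          · cases hp
      | @anop lA νA τA g Y lA' sB he hg =>
          obtain ⟨nA, nB, trA, trB, hA, hB, hAB, hp⟩ := ih
          simp only at hA hB hAB hp
          rcases hp with ⟨_, hM⟩ | ⟨a, ag, trA₀, s, hp, _⟩
          · obtain ⟨kA, hA'⟩ := hA.trans (ASeg.nop (M := M) he hg (ASeg.nil _))
            rw [List.append_nil] at hA'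
            exact ⟨kA, nB, trA, trB, hA', hB, hAB, Or.inl ⟨rfl, hM⟩⟩
          · cases hp
      | @awrite lA νA τA g a Y lA' sB he hg hle =>
          obtain ⟨nA, nB, trA, trB, hA, hB, hAB, hp⟩ := ih
          simp only at hA hB hAB hp
          rcases hp with ⟨_, hM⟩ | ⟨a', ag, trA₀, s, hp, _⟩
          · obtain ⟨kA, hA'⟩ := hA.trans (ASeg.write (M := M) he hg (ASeg.nil _))
            refine ⟨kA, nB, trA ++ [(a, τA)], trB, hA', hB, hAB,
              Or.inr ⟨a, sB.2.2 - τA, trA, τA, rfl, rfl, hM,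
                by show τA + (sB.2.2 - τA) = sB.2.2; omega⟩⟩
          · cases hp
      | @btime lB νB τB t sA p =>
          obtain ⟨nA, nB, trA, trB, hA, hB, hAB, hp⟩ := ih
          simp only at hA hB hAB hp
          obtain ⟨kB, hB'⟩ := hB.trans (BSeg.time (M := M) t (BSeg.nil _))
          rw [List.append_nil] at hB'
          have hAB' : sA.2.2 ≤ τB + t := le_trans hAB (by omega)
          rcases hp with ⟨hp, hM⟩ | ⟨a, ag, trA₀, s, hp, htrA, hM, hsum⟩
          · subst hp
            exact ⟨nA, kB, trA, trB, hA, hB', hAB', Or.inl ⟨rfl, hM⟩⟩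
          · subst hp
            refine ⟨nA, kB, trA, trB, hA, hB', hAB',
              Or.inr ⟨a, ag + t, trA₀, s, rfl, htrA, hM, ?_⟩⟩
            show s + (ag + t) = τB + t
            omega
      | @bnop lB νB τB g Y lB' sA p he hg =>
          obtain ⟨nA, nB, trA, trB, hA, hB, hAB, hp⟩ := ih
          simp only at hA hB hAB hp
          obtain ⟨kB, hB'⟩ := hB.trans (BSeg.nop (M := M) he hg (BSeg.nil _))
          rw [List.append_nil] at hB'
          rcases hp with ⟨hp, hM⟩ | ⟨a, ag, trA₀, s, hp, htrA, hM, hsum⟩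
          · subst hp
            exact ⟨nA, kB, trA, trB, hA, hB', hAB, Or.inl ⟨rfl, hM⟩⟩
          · subst hp
            exact ⟨nA, kB, trA, trB, hA, hB', hAB,
              Or.inr ⟨a, ag, trA₀, s, rfl, htrA, hM, hsum⟩⟩
      | @bread lB νB τB g a I Y lB' ag sA he hg hmem =>
          obtain ⟨nA, nB, trA, trB, hA, hB, hAB, hp⟩ := ih
          simp only at hA hB hAB hp
          obtain ⟨kB, hB'⟩ := hB.trans (BSeg.read (M := M) he hg (BSeg.nil _))
          rcases hp with ⟨hp, _⟩ | ⟨a', ag', trA₀, s, hp, htrA, hM, hsum⟩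
          · cases hp
          · injection hp with hp2
            injection hp2 with ha hag
            refine ⟨nA, kB, trA, trB ++ [(a, I, τB)], hA, hB', hAB, Or.inl ⟨rfl, ?_⟩⟩
            rw [htrA, ← ha]
            refine List.rel_append hM (List.Forall₂.cons ⟨rfl, ?_, ?_⟩ List.Forall₂.nil)
            · show s ≤ τB
              omega
            · show τB - s ∈ I
              have h3 : τB - s = ag := by omega
              rw [h3]; exact hmem


/-- Matching between a channel message (with its current age) and a future read. -/
def WInv (T : ℕ) : (α × ℕ) → (α × Set ℕ × ℕ) → Prop :=
  fun msg rd => msg.1 = rd.1 ∧ T ≤ rd.2.2 ∧ msg.2 + (rd.2.2 - T) ∈ rd.2.1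

theorem forall₂_map_left {β γ δ : Type _} {P : β → γ → Prop} {Q : δ → γ → Prop} {f : β → δ}
    {l : List β} {u : List γ} (h : List.Forall₂ P l u)
    (himp : ∀ x y, P x y → y ∈ u → Q (f x) y) : List.Forall₂ Q (l.map f) u := by
  induction h with
  | nil => exact .nil
  | cons h1 h2 ih =>
      exact .cons (himp _ _ h1 (by simp))
        (ih (fun x y hp hy => himp x y hp (by simp [hy])))

theorem forall₂_rev_cons {P : (α × ℕ) → (α × Set ℕ × ℕ) → Prop} {w : List (α × ℕ)}
    {rd : α × Set ℕ × ℕ} {u' : List (α × Set ℕ × ℕ)}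
    (h : List.Forall₂ P w.reverse (rd :: u')) :
    ∃ msg ws, w = List.reverse ws ++ [msg] ∧ P msg rd ∧ List.Forall₂ P ws u' := by
  generalize hg : w.reverse = wr at h
  cases h with
  | @cons msg rd0 ws u0 h1 h2 =>
      refine ⟨msg, ws, ?_, h1, h2⟩
      rw [← List.reverse_reverse w, hg, List.reverse_cons]

/-- Merging matched local runs into a synchronous run. -/
theorem syncMerge : ∀ (N : ℕ), ∀ (nA nB T : ℕ) (lA : LA) (νA : XA → ℕ) (lB : LB)
    (νB : XB → ℕ) (w trA : List (α × ℕ)) (trB : List (α × Set ℕ × ℕ))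
    (eA : LA × (XA → ℕ) × ℕ) (eB : LB × (XB → ℕ) × ℕ) (u v : List (α × Set ℕ × ℕ)),
    nA + nB ≤ N →
    ASeg M nA (lA, νA, T) trA eA → BSeg M nB (lB, νB, T) trB eB → eA.2.2 = eB.2.2 →
    trB = u ++ v → List.Forall₂ (WInv T) w.reverse u → List.Forall₂ MR trA v →
    Relation.ReflTransGen (Step M) ((lA, νA), (lB, νB), w)
      ((eA.1, eA.2.1), (eB.1, eB.2.1), []) := by
  intro N
  induction N with
  | zero =>
      intro nA nB T lA νA lB νB w trA trB eA eB u v hN hA hB heq htrB hwu hMv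
      have hnA : nA = 0 := by omega
      have hnB : nB = 0 := by omega
      subst hnA; subst hnB
      cases hA; cases hB
      cases hMv
      have hu : u = [] := by
        have := htrB.symm
        rw [List.append_nil] at this
        exact this
      subst hu
      have hw : w = [] := by
        have hlen := hwu.length_eq
        simp at hlen
        exact hlen
      subst hw
      exact .refl
  | succ N ih =>
      intro nA nB T lA νA lB νB w trA trB eA eB u v hN hA hB heq htrB hwu hMv
      cases hA with
      | nop he hg restA =>
          refine Relation.ReflTransGen.head ⟨0, StepD.anop lB νB w he hg⟩ ?_
          exact ih _ _ T _ _ lB νB w trA trB eA eB u v (by omega) restA hB heq htrB hwu hMv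
      | @write n _ _ _ g a Y l' tr _ he hg restA =>
          cases hMv with
          | @cons _ rd _ v' hR hMv' =>
              obtain ⟨a', I, r⟩ := rd
              obtain ⟨ha, hsr, hmemI⟩ := hR
              simp only at ha hsr hmemI
              refine Relation.ReflTransGen.head ⟨0, StepD.awrite lB νB w he hg⟩ ?_
              refine ih _ _ T _ _ lB νB ((a, 0) :: w) tr trB eA eB (u ++ [(a', I, r)]) v'
                (by omega) restA hB heq ?_ ?_ hMv'
              · rw [htrB, List.append_assoc]; rfl
              · rw [List.reverse_cons]
                refine List.rel_append hwu (List.Forall₂.cons ⟨ha, hsr, ?_⟩ List.Forall₂.nil)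
                show 0 + (r - T) ∈ I
                rw [Nat.zero_add]
                exact hmemI
      | @time n _ _ _ _ _ t restA =>
          rcases Nat.eq_zero_or_pos t with ht0 | htpos
          · subst ht0
            exact ih _ _ T _ _ lB νB w trA trB eA eB u v (by omega) restA hB heq htrB hwu hMv
          · cases hB with
            | nil =>
                exfalso
                have h1 : T + t ≤ eA.2.2 := restA.mono
                have h2 : eA.2.2 = T := heq
                omega
            | nop heB hgB restB =>
                refine Relation.ReflTransGen.head ⟨0, StepD.bnop lA νA w heB hgB⟩ ?_
                exact ih _ _ T _ _ _ _ w trA trB eA eB u v (by omega)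
                  (ASeg.time t restA) restB heq htrB hwu hMv
            | @read nB' _ _ _ gB a I Y lB' trB₂ _ heB hgB restB =>
                cases u with
                | nil =>
                    exfalso
                    simp only [List.nil_append] at htrB
                    subst htrB
                    cases hMv with
                    | @cons wr _ trA₂ _ hR hMv' =>
                        have hlb := restA.lb wr (by simp)
                        have h1 : T + t ≤ wr.2 := hlb
                        have h2 : wr.2 ≤ T := hR.2.1
                        omega
                | cons rd u' =>
                    injection htrB with hrd htrB2
                    obtain ⟨msg, ws, hw, hR0, hwu'⟩ := forall₂_rev_cons (hrd ▸ hwu)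
                    obtain ⟨ma, md⟩ := msg
                    obtain ⟨hma, _, hmd⟩ := hR0
                    simp only at hma hmd
                    subst hma
                    have hmd' : md ∈ I := by simpa using hmd
                    subst hw
                    refine Relation.ReflTransGen.head
                      ⟨0, StepD.bread lA νA ws.reverse heB hgB hmd'⟩ ?_
                    refine ih _ _ T _ _ _ _ ws.reverse trA trB₂ eA eB u' v (by omega)
                      (ASeg.time t restA) restB heq htrB2 ?_ hMv
                    rw [List.reverse_reverse]
                    exact hwu'
            | @time nB' _ _ _ _ _ tB restB =>
                rcases Nat.eq_zero_or_pos tB with htB0 | htBpos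
                · subst htB0
                  exact ih _ _ T _ _ _ _ w trA trB eA eB u v (by omega)
                    (ASeg.time t restA) restB heq htrB hwu hMv
                · have hu_lb : ∀ rd ∈ u, T + tB ≤ rd.2.2 := by
                    intro rd hrd
                    exact restB.lb rd (htrB ▸ List.mem_append_left v hrd)
                  rcases le_total t tB with htle | htle
                  · refine Relation.ReflTransGen.head ⟨t, StepD.time t lA νA lB νB w⟩ ?_
                    have hB' : BSeg M (nB' + 1) (lB, (fun x => νB x + t), T + t) trB eB := by
                      have hf : (fun x => νB x + tB) = (fun x => νB x + t + (tB - t)) := by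
                        funext x; omega
                      have ht2 : T + tB = T + t + (tB - t) := by omega
                      have hrB := restB
                      rw [hf, ht2] at hrB
                      exact BSeg.time (tB - t) hrB
                    refine ih _ _ (T + t) _ _ _ _ (w.map fun p => (p.1, p.2 + t))
                      trA trB eA eB u v (by omega) restA hB' heq htrB ?_ hMv
                    rw [← List.map_reverse]
                    refine forall₂_map_left hwu ?_
                    intro x y hxy hyU
                    have h1 := hu_lb y hyU
                    refine ⟨hxy.1, by omega, ?_⟩
                    show x.2 + t + (y.2.2 - (T + t)) ∈ y.2.1
                    have h2 : x.2 + t + (y.2.2 - (T + t)) = x.2 + (y.2.2 - T) := by omega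
                    rw [h2]
                    exact hxy.2.2
                  · refine Relation.ReflTransGen.head ⟨tB, StepD.time tB lA νA lB νB w⟩ ?_
                    have hA' : ASeg M (n + 1) (lA, (fun x => νA x + tB), T + tB) trA eA := by
                      have hf : (fun x => νA x + t) = (fun x => νA x + tB + (t - tB)) := by
                        funext x; omega
                      have ht2 : T + t = T + tB + (t - tB) := by omega
                      have hrA := restA
                      rw [hf, ht2] at hrA
                      exact ASeg.time (t - tB) hrA
                    refine ih _ _ (T + tB) _ _ _ _ (w.map fun p => (p.1, p.2 + tB))
                      trA trB eA eB u v (by omega) hA' restB heq htrB ?_ hMv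
                    rw [← List.map_reverse]
                    refine forall₂_map_left hwu ?_
                    intro x y hxy hyU
                    have h1 := hu_lb y hyU
                    refine ⟨hxy.1, by omega, ?_⟩
                    show x.2 + tB + (y.2.2 - (T + tB)) ∈ y.2.1
                    have h2 : x.2 + tB + (y.2.2 - (T + tB)) = x.2 + (y.2.2 - T) := by omega
                    rw [h2]
                    exact hxy.2.2
      | nil =>
          cases hMv
          rw [List.append_nil] at htrB
          subst htrB
          cases hB with
          | nil =>
              have hw : w = [] := by
                have hlen := hwu.length_eq
                simp at hlen
                exact hlen
              subst hw
              exact .refl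
          | nop heB hgB restB =>
              refine Relation.ReflTransGen.head ⟨0, StepD.bnop lA νA w heB hgB⟩ ?_
              exact ih _ _ T _ _ _ _ w [] trB _ eB trB [] (by omega) (ASeg.nil _) restB heq
                (List.append_nil trB).symm hwu List.Forall₂.nil
          | @read nB' _ _ _ gB a I Y lB' trB₂ _ heB hgB restB =>
              obtain ⟨msg, ws, hw, hR0, hwu'⟩ := forall₂_rev_cons hwu
              obtain ⟨ma, md⟩ := msg
              obtain ⟨hma, _, hmd⟩ := hR0
              simp only at hma hmd
              subst hma
              have hmd' : md ∈ I := by simpa using hmd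
              subst hw
              refine Relation.ReflTransGen.head
                ⟨0, StepD.bread lA νA ws.reverse heB hgB hmd'⟩ ?_
              refine ih _ _ T _ _ _ _ ws.reverse [] trB₂ _ eB trB₂ [] (by omega)
                (ASeg.nil _) restB heq (List.append_nil trB₂).symm ?_ List.Forall₂.nil
              rw [List.reverse_reverse]
              exact hwu'
          | @time nB' _ _ _ _ _ tB restB =>
              rcases Nat.eq_zero_or_pos tB with htB0 | htBpos
              · subst htB0
                exact ih _ _ T _ _ _ _ w [] trB _ eB trB [] (by omega) (ASeg.nil _) restB heq
                  (List.append_nil trB).symm hwu List.Forall₂.nil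
              · exfalso
                have h1 : T + tB ≤ eB.2.2 := restB.mono
                have h2 : T = eB.2.2 := heq
                omega

theorem rtg_to_reachT {γ : Conf2 LA LB XA XB α}
    (h : Relation.ReflTransGen (Step M)
      ((M.initA, fun _ => 0), (M.initB, fun _ => 0), ([] : List (α × ℕ))) γ) :
    ∃ T, ReachT M T γ := by
  induction h with
  | refl => exact ⟨0, .init⟩
  | tail h1 h2 ih =>
      obtain ⟨T, hT⟩ := ih
      obtain ⟨t, hs⟩ := h2
      exact ⟨T + t, hT.step hs⟩

theorem reachT_to_rtg {T : ℕ} {γ : Conf2 LA LB XA XB α} (h : ReachT M T γ) :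
    Relation.ReflTransGen (Step M)
      ((M.initA, fun _ => 0), (M.initB, fun _ => 0), ([] : List (α × ℕ))) γ := by
  induction h with
  | init => exact .refl
  | step hR hs ih => exact ih.tail ⟨_, hs⟩

end Aux

/-- reachability of empty-channel configurations is invariant under
de-synchronization: `((l_A,ν_A),(l_B,ν_B),ε)` is reachable in the synchronous semantics
iff it is reachable in the de-synchronized semantics with both processes having elapsed
the same total time `τ` and no pending message. -/
theorem stmt19 (M : TwoCTA LA LB XA XB α) (lA : LA) (νA : XA → ℕ)
    (lB : LB) (νB : XB → ℕ) :
    Relation.ReflTransGen (Step M)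
        ((M.initA, fun _ => 0), (M.initB, fun _ => 0), ([] : List (α × ℕ)))
        ((lA, νA), (lB, νB), []) ↔
    ∃ τ : ℕ, Relation.ReflTransGen (DStep M)
        ((M.initA, fun _ => 0, 0), (M.initB, fun _ => 0, 0), none)
        ((lA, νA, τ), (lB, νB, τ), none) := by
  constructor
  · intro h
    obtain ⟨T, hT⟩ := rtg_to_reachT h
    obtain ⟨nA, nB, trM, trU, trB, hA, hB, hM, hw, hub⟩ := sInv hT
    simp only at hA hB hw
    have htrU : trU = [] := by
      have h2 := hw.symm
      rw [List.reverse_eq_nil_iff, List.map_eq_nil_iff] at h2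
      exact h2
    subst htrU
    rw [List.append_nil] at hA
    exact ⟨T, dmerge hM hA hB (le_refl 0) rfl⟩
  · rintro ⟨τ, h⟩
    obtain ⟨nA, nB, trA, trB, hA, hB, hAB, hp⟩ := dInv h
    simp only at hA hB hp
    rcases hp with ⟨_, hM⟩ | ⟨a, ag, trA₀, s, hp, _⟩
    · exact syncMerge (nA + nB) nA nB 0 M.initA (fun _ => 0) M.initB (fun _ => 0) []
        trA trB (lA, νA, τ) (lB, νB, τ) [] trB (le_refl _) hA hB rfl rfl
        List.Forall₂.nil hM
    · cases hp
end
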